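/- Let β be a continuous global action of a topological group G on a topological space Y, X an open subset of Y with Y = ⋃_{g∈G} β_g(X), and θ the partial action induced on X by restriction. Then the enveloping space X_G of θ is G-equivariantly homeomorphic to Y. -/

import Mathlib

/-- A set-theoretic partial action of a group `G` on a set `X`, encoded by a
domain predicate `dom g x` (meaning "`g • x` is defined") and a total map `act`
whose values are only relevant on the domain; axioms (PA1)-(PA3). -/
structure SetPartialAction (G : Type*) (X : Type*) [Group G] where
  dom : G → X → Prop
  act : G → X → X
  dom_one : ∀ x, dom 1 x
  act_one : ∀ x, act 1 x = x
  dom_inv : ∀ g x, dom g x → dom g⁻¹ (act g x)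
  act_inv : ∀ g x, dom g x → act g⁻¹ (act g x) = x
  dom_mul : ∀ g h x, dom h x → dom g (act h x) → dom (g * h) x
  act_mul : ∀ g h x, dom h x → dom g (act h x) → act g (act h x) = act (g * h) x

/-- The enveloping relation on `G × X`: `(g,x) R (h,y)` iff `x ∈ X_{g⁻¹h}`
(i.e. `θ_{h⁻¹g}` is defined at `x`) and `θ_{h⁻¹g}(x) = y`. -/
def envRel {G X : Type*} [Group G] (θ : SetPartialAction G X) :
    (G × X) → (G × X) → Prop :=
  fun p q => θ.dom (q.1⁻¹ * p.1) p.2 ∧ θ.act (q.1⁻¹ * p.1) p.2 = q.2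

-- The partial action on a subset X of a G-set Y induced by restriction of the
-- global action: X_g = X ∩ g • X, θ_g = (g • ·) restricted.
open Classical in
noncomputable def inducedPA (G Y : Type*) [Group G] [MulAction G Y] (X : Set Y) :
    SetPartialAction G X where
  dom g x := g • (x : Y) ∈ X
  act g x := if h : g • (x : Y) ∈ X then ⟨g • (x : Y), h⟩ else x
  dom_one x := by simpa using x.2
  act_one x := by
    have h : (1 : G) • (x : Y) ∈ X := by simpa using x.2
    simp [dif_pos h, Subtype.ext_iff]
  dom_inv g x h := by simp [dif_pos h, x.2]
  act_inv g x h := by simp [dif_pos h, x.2, Subtype.ext_iff]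
  dom_mul g h x hx hg := by
    simp only [dif_pos hx] at hg
    simpa [mul_smul] using hg
  act_mul g h x hx hg := by
    simp only [dif_pos hx] at hg ⊢
    have : (g * h) • (x : Y) ∈ X := by simpa [mul_smul] using hg
    simp [dif_pos hg, dif_pos this, Subtype.ext_iff, mul_smul]

/-- If Y carries a continuous global G-action, X ⊆ Y is open and
Y = ⋃_{g ∈ G} g • X, then the enveloping space X_G of the induced partial
action is G-equivariantly homeomorphic to Y. -/
theorem stmt7 {G Y : Type*} [Group G] [TopologicalSpace G] [IsTopologicalGroup G]
    [T2Space G] [TopologicalSpace Y] [MulAction G Y] [ContinuousSMul G Y]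
    (X : Set Y) (hX : IsOpen X) (hcov : ∀ y : Y, ∃ (g : G) (x : X), g • (x : Y) = y) :
    ∃ F : Quot (envRel (inducedPA G Y X)) ≃ₜ Y,
      (∀ (g : G) (x : X), F (Quot.mk _ (g, x)) = g • (x : Y)) ∧
      (∀ (g h : G) (x : X),
        F (Quot.mk _ (g * h, x)) = g • F (Quot.mk _ (h, x))) := by
  classical
  set θ := inducedPA G Y X
  set p : G × X → Y := fun q => q.1 • (q.2 : Y) with hp
  have hwd : ∀ a b, envRel θ a b → p a = p b := by
    rintro ⟨g, x⟩ ⟨h, y⟩ ⟨hd, ha⟩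
    simp only [θ, inducedPA] at hd ha
    rw [dif_pos hd] at ha
    have : (h⁻¹ * g) • (x : Y) = (y : Y) := congrArg Subtype.val ha
    simp only [p]
    calc g • (x : Y) = h • ((h⁻¹ * g) • (x : Y)) := by rw [← mul_smul, mul_inv_cancel_left]
      _ = h • (y : Y) := by rw [this]
  set F' : Quot (envRel θ) → Y := Quot.lift p hwd with hF'
  have hinj : Function.Injective F' := by
    intro a b
    induction a using Quot.ind with | _ a =>
    induction b using Quot.ind with | _ b =>
    obtain ⟨g, x⟩ := a; obtain ⟨h, y⟩ := b
    intro hfe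
    have hfe' : g • (x : Y) = h • (y : Y) := hfe
    have hk : (h⁻¹ * g) • (x : Y) = (y : Y) := by
      rw [mul_smul, hfe', ← mul_smul, inv_mul_cancel, one_smul]
    have hd : (h⁻¹ * g) • (x : Y) ∈ X := hk ▸ y.2
    apply Quot.sound
    refine ⟨hd, ?_⟩
    simp only [θ, inducedPA]
    rw [dif_pos hd]
    exact Subtype.ext hk
  have hsurj : Function.Surjective F' := by
    intro y
    obtain ⟨g, x, hgx⟩ := hcov y
    exact ⟨Quot.mk _ (g, x), hgx⟩
  have hcont : Continuous F' := continuous_quot_lift hwd (by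
    exact (continuous_fst.smul (continuous_subtype_val.comp continuous_snd)))
  have hp_open : IsOpenMap p := by
    intro U hU
    rw [isOpen_iff_forall_mem_open]
    rintro y ⟨⟨g, x⟩, hgx, rfl⟩
    rcases isOpen_prod_iff.mp hU g x hgx with ⟨A, B, hA, hB, hgA, hxB, hAB⟩
    rcases isOpen_induced_iff.mp hB with ⟨C, hC, rfl⟩
    refine ⟨(g • ·) '' (C ∩ X), ?_, (Homeomorph.smul g (α := Y)).isOpenMap _ (hC.inter hX),
      ⟨(x : Y), ⟨hxB, x.2⟩, rfl⟩⟩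
    rintro _ ⟨z, ⟨hzC, hzX⟩, rfl⟩
    exact ⟨(g, ⟨z, hzX⟩), hAB ⟨hgA, hzC⟩, rfl⟩
  have hopen : IsOpenMap F' := by
    intro W hW
    have : F' '' W = p '' (Quot.mk _ ⁻¹' W) := by
      conv_lhs => rw [← Set.image_preimage_eq W (Quot.mk_surjective)]
      rw [Set.image_image]
    rw [this]
    exact hp_open _ (continuous_quot_mk.isOpen_preimage W hW)
  refine ⟨Equiv.toHomeomorphOfContinuousOpen (Equiv.ofBijective F' ⟨hinj, hsurj⟩) hcont hopen,
    fun g x => rfl, fun g h x => ?_⟩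
  show (g * h) • (x : Y) = g • (h • (x : Y))
  rw [mul_smul]
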